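/- arXiv:2304.08148 — 2 statements merged into one kernel-verified Lean document; each statement's English description precedes it below -/
import Mathlib

section
/- Let P be a point in the open unit disk D. Then for every v ∈ S¹ the circle map ψ_P is differentiable at v (with respect to a lift to ℝ), and its derivative is ψ_P'(v) = |P ψ_P(v)| / |v P|, where |XY| denotes the Euclidean distance between X and Y. -/
open Real Set

noncomputable section

/-- The open unit disk `D` in `ℂ ≅ ℝ²`. -/
def unitDisk : Set ℂ := {z : ℂ | ‖z‖ < 1}

/-- The unit circle `S¹ = ∂D`. -/
def unitCircle : Set ℂ := {z : ℂ | ‖z‖ = 1}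

/-- The (two-sided infinite) line through `a` and `b`. -/
def lineThrough (a b : ℂ) : Set ℂ := {p : ℂ | ∃ t : ℝ, p = a + t • (b - a)}

/-- The line through `a` and `b` is tangent to the convex set `U`: it meets `U`
and `U` lies in one closed half-plane bounded by this line. -/
def IsTangent (U : Set ℂ) (a b : ℂ) : Prop :=
  (lineThrough a b ∩ U).Nonempty ∧
    ∃ φ : ℂ →L[ℝ] ℝ, φ ≠ 0 ∧ (∀ p ∈ lineThrough a b, φ p = φ a) ∧ ∀ u ∈ U, φ u ≤ φ a

/-- The counterclockwise tangent map `ψ_U`: for `v` on the unit circle, `psi U v` is the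
point of the circle closest to `v` in the counterclockwise direction among points `w` such
that the chord `vw` is tangent to `U` (obtained by rotating `v` by the infimum of the
admissible counterclockwise angles). -/
def psi (U : Set ℂ) (v : ℂ) : ℂ :=
  v * Complex.exp ((sInf {s : ℝ | 0 < s ∧ s ≤ 2 * π ∧
    IsTangent U v (v * Complex.exp (s * Complex.I))}) * Complex.I)

/-- The projection `π : ℝ → S¹ = ℝ/ℤ`, realized as `x ↦ e^{2πix}`. -/
def projS1 (x : ℝ) : ℂ := Complex.exp (2 * π * x * Complex.I)

/-- `F` is the lift of the circle map `f` (through `projS1`) normalized by `F 0 ∈ [0,1)`. -/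
def IsNormalizedLift (f : ℂ → ℂ) (F : CircleDeg1Lift) : Prop :=
  (∀ x : ℝ, f (projS1 x) = projS1 (F x)) ∧ F 0 ∈ Ico (0 : ℝ) 1

/-- The rotation number `ρ(f)` of a circle map `f`, via the translation number of its
normalized monotone degree-one lift. -/
def rotationNumber (f : ℂ → ℂ) : ℝ :=
  sInf {r : ℝ | ∃ F : CircleDeg1Lift, IsNormalizedLift f F ∧ r = F.translationNumber}

/-- second intersection map -/
def mob (P v : ℂ) : ℂ := (v - P) / ((starRingEnd ℂ) P * v - 1)

lemma den_ne {P v : ℂ} (hP : ‖P‖ < 1) (hv : ‖v‖ = 1) :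
    (starRingEnd ℂ) P * v - 1 ≠ 0 := by
  intro h
  rw [sub_eq_zero] at h
  have : ‖(starRingEnd ℂ) P * v‖ = 1 := by rw [h]; simp
  rw [norm_mul, Complex.norm_conj, hv, mul_one] at this
  exact absurd this (ne_of_lt hP)

lemma v_mul_conj {v : ℂ} (hv : ‖v‖ = 1) : v * (starRingEnd ℂ) v = 1 := by
  rw [Complex.mul_conj]
  norm_cast
  rw [Complex.normSq_eq_norm_sq, hv]; norm_num

lemma abs_sub_conj {P v : ℂ} (hv : ‖v‖ = 1) :
    ‖v - P‖ = ‖(starRingEnd ℂ) P * v - 1‖ := by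
  have h : ((starRingEnd ℂ) v - (starRingEnd ℂ) P) * v = 1 - (starRingEnd ℂ) P * v := by
    have := v_mul_conj hv
    linear_combination this
  calc ‖v - P‖ = ‖(starRingEnd ℂ) (v - P)‖ := (Complex.norm_conj _).symm
    _ = ‖(starRingEnd ℂ) (v - P)‖ * ‖v‖ := by rw [hv, mul_one]
    _ = ‖((starRingEnd ℂ) v - (starRingEnd ℂ) P) * v‖ := by
        rw [← norm_mul, map_sub]
    _ = ‖1 - (starRingEnd ℂ) P * v‖ := by rw [h]
    _ = ‖(starRingEnd ℂ) P * v - 1‖ := by exact norm_sub_rev 1 _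

lemma abs_mob {P v : ℂ} (hP : ‖P‖ < 1) (hv : ‖v‖ = 1) :
    ‖mob P v‖ = 1 := by
  rw [mob, norm_div, ← abs_sub_conj hv, div_self]
  rw [abs_sub_conj hv]
  exact (norm_ne_zero_iff).mpr (den_ne hP hv)

lemma isTangent_singleton_iff {P v w : ℂ} (hPv : P ≠ v) :
    IsTangent {P} v w ↔ P ∈ lineThrough v w := by
  constructor
  · rintro ⟨⟨q, hq1, hq2⟩, -⟩
    rw [mem_singleton_iff] at hq2
    exact hq2 ▸ hq1
  · intro hline
    refine ⟨⟨P, hline, rfl⟩, ?_⟩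
    have hwv : w - v ≠ 0 := by
      intro h
      obtain ⟨t, ht⟩ := hline
      rw [h, smul_zero, add_zero] at ht
      exact hPv ht
    set c : ℂ := (starRingEnd ℂ) (Complex.I * (w - v)) with hc
    have hcne : c ≠ 0 := by
      simp only [hc, ne_eq, map_eq_zero, mul_eq_zero, Complex.I_ne_zero, false_or]
      exact hwv
    refine ⟨Complex.reCLM.comp (c • ContinuousLinearMap.id ℝ ℂ), ?_, ?_, ?_⟩
    · intro h
      have h2 : (Complex.reCLM.comp (c • ContinuousLinearMap.id ℝ ℂ)) ((starRingEnd ℂ) c) = 0 := by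
        rw [h]; rfl
      simp only [ContinuousLinearMap.comp_apply, ContinuousLinearMap.smul_apply,
        ContinuousLinearMap.id_apply, Complex.reCLM_apply, smul_eq_mul,
        Complex.mul_conj] at h2
      rw [Complex.ofReal_re] at h2
      exact hcne (by rwa [← Complex.normSq_eq_zero])
    · rintro p ⟨t, rfl⟩
      simp only [ContinuousLinearMap.comp_apply, ContinuousLinearMap.smul_apply,
        ContinuousLinearMap.id_apply, Complex.reCLM_apply, smul_eq_mul]
      have hkey : (c * (w - v)).re = 0 := by
        rw [hc]
        have : (starRingEnd ℂ) (Complex.I * (w - v)) * (w - v)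
            = -Complex.I * ((starRingEnd ℂ) (w - v) * (w - v)) := by
          rw [map_mul, Complex.conj_I]; ring
        rw [this, Complex.conj_mul', ← Complex.ofReal_pow]
        simp [← Complex.ofReal_pow]
      have : c * (v + (t : ℝ) • (w - v)) = c * v + (t : ℂ) * (c * (w - v)) := by
        rw [Complex.real_smul]; ring
      rw [this, Complex.add_re, Complex.re_ofReal_mul, hkey, mul_zero, add_zero]
    · intro u hu
      rw [mem_singleton_iff] at hu
      subst hu
      obtain ⟨t, ht⟩ := hline
      have hkey : (c * (w - v)).re = 0 := by
        rw [hc]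
        have : (starRingEnd ℂ) (Complex.I * (w - v)) * (w - v)
            = -Complex.I * ((starRingEnd ℂ) (w - v) * (w - v)) := by
          rw [map_mul, Complex.conj_I]; ring
        rw [this, Complex.conj_mul', ← Complex.ofReal_pow]
        simp [← Complex.ofReal_pow]
      simp only [ContinuousLinearMap.comp_apply, ContinuousLinearMap.smul_apply,
        ContinuousLinearMap.id_apply, Complex.reCLM_apply, smul_eq_mul]
      rw [ht]
      have : c * (v + (t : ℝ) • (w - v)) = c * v + (t : ℂ) * (c * (w - v)) := by
        rw [Complex.real_smul]; ring
      rw [this, Complex.add_re, Complex.re_ofReal_mul, hkey, mul_zero, add_zero]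

lemma mem_line_iff_eq_mob {P v w : ℂ} (hP : ‖P‖ < 1) (hv : ‖v‖ = 1)
    (hw : ‖w‖ = 1) : P ∈ lineThrough v w ↔ w = mob P v := by
  have hv1 := v_mul_conj hv
  have hw1 := v_mul_conj hw
  have hd := den_ne hP hv
  constructor
  · rintro ⟨t, ht⟩
    rw [Complex.real_smul] at ht
    rw [mob, eq_div_iff hd, ht]
    push_cast
    rw [map_add, map_mul, map_sub, Complex.conj_ofReal]
    linear_combination (1 - (t:ℂ)) * w * hv1 + (t:ℂ) * v * hw1
  · intro hweq
    have hdre : ((starRingEnd ℂ) P * v).re < 1 := by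
      calc ((starRingEnd ℂ) P * v).re ≤ ‖(starRingEnd ℂ) P * v‖ := Complex.re_le_norm _
        _ = ‖P‖ := by rw [norm_mul, Complex.norm_conj, hv, mul_one]
        _ < 1 := hP
    refine ⟨Complex.normSq (1 - (starRingEnd ℂ) P * v) / (2 - 2 * ((starRingEnd ℂ) P * v).re), ?_⟩
    rw [hweq, Complex.real_smul]
    have hden2 : (2 : ℝ) - 2 * ((starRingEnd ℂ) P * v).re ≠ 0 := by linarith
    rw [mob]
    push_cast
    set d := (starRingEnd ℂ) P * v with hdd
    have hv0 : v ≠ 0 := by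
      intro h; rw [h] at hv; simp at hv
    have he : (starRingEnd ℂ) v = v⁻¹ := by
      apply eq_inv_of_mul_eq_one_left
      rw [mul_comm]; exact hv1
    have hc1 : ((Complex.normSq (1 - d) : ℝ) : ℂ) = (1 - d) * (1 - (starRingEnd ℂ) d) := by
      rw [← Complex.mul_conj, map_sub, map_one]
    have hc2 : (2 : ℂ) - 2 * (d.re : ℝ) = 2 - (d + (starRingEnd ℂ) d) := by
      rw [Complex.add_conj]; push_cast; ring
    have h3 : (2 : ℂ) - (d + (starRingEnd ℂ) d) ≠ 0 := by
      rw [← hc2]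
      have : ((2 - 2 * d.re : ℝ) : ℂ) ≠ 0 := Complex.ofReal_ne_zero.mpr hden2
      push_cast at this
      convert this using 1
    have hcd : (starRingEnd ℂ) d = P * v⁻¹ := by
      rw [hdd, map_mul, Complex.conj_conj, he]
    rw [hc1, hc2, hcd]
    have e1 : (v - P) / (d - 1) - v = v * (2 - (d + P * v⁻¹)) / (d - 1) := by
      rw [eq_div_iff hd]
      field_simp
      ring
    rw [hcd] at h3
    rw [e1, div_mul_div_comm, eq_comm, ← eq_sub_iff_add_eq', div_eq_iff (mul_ne_zero h3 hd)]
    field_simp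
    ring

lemma exists_s0 {μ : ℂ} (hμ : ‖μ‖ = 1) (hμ1 : μ ≠ 1) :
    ∃ s : ℝ, 0 < s ∧ s < 2 * π ∧ Complex.exp (s * Complex.I) = μ := by
  have harg : Complex.exp (μ.arg * Complex.I) = μ := by
    conv_rhs => rw [← Complex.norm_mul_exp_arg_mul_I μ]
    rw [hμ, Complex.ofReal_one, one_mul]
  have hargne : μ.arg ≠ 0 := by
    intro h
    rw [h] at harg
    simp at harg
    exact hμ1 harg.symm
  have hpi := Real.pi_pos
  rcases lt_or_gt_of_ne hargne with h | h
  · refine ⟨μ.arg + 2 * π, by linarith [Complex.neg_pi_lt_arg μ], by linarith, ?_⟩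
    push_cast
    rw [add_mul, Complex.exp_add, harg, Complex.exp_two_pi_mul_I, mul_one]
  · exact ⟨μ.arg, h, by linarith [Complex.arg_le_pi μ], harg⟩

lemma exp_mul_I_inj {s s' : ℝ} (h1 : 0 < s) (h2 : s ≤ 2 * π) (h3 : 0 < s') (h4 : s' ≤ 2 * π)
    (h : Complex.exp (s * Complex.I) = Complex.exp (s' * Complex.I)) : s = s' := by
  rw [Complex.exp_eq_exp_iff_exists_int] at h
  obtain ⟨n, hn⟩ := h
  have him := congrArg Complex.im hn
  simp [Complex.mul_im, Complex.add_im] at him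
  -- him : s = s' + n * (2 * π)  (roughly)
  have hpi := Real.pi_pos
  have hn0 : n = 0 := by
    rcases lt_trichotomy n 0 with hlt | heq | hgt
    · have : (n : ℝ) ≤ -1 := by exact_mod_cast (show n ≤ -1 by omega)
      nlinarith
    · exact heq
    · have : (1 : ℝ) ≤ n := by exact_mod_cast hgt
      nlinarith
  rw [hn0] at him
  simpa using him

lemma psi_point_eq {P v : ℂ} (hP : ‖P‖ < 1) (hv : ‖v‖ = 1) :
    psi {P} v = mob P v := by
  have hv0 : v ≠ 0 := by intro h; rw [h] at hv; simp at hv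
  have hv1 := v_mul_conj hv
  have hPv : P ≠ v := by intro h; rw [h, hv] at hP; exact lt_irrefl _ hP
  set μ := mob P v * v⁻¹ with hμ
  have hμabs : ‖μ‖ = 1 := by
    rw [hμ, norm_mul, abs_mob hP hv, norm_inv, hv]; norm_num
  have hmv : mob P v = μ * v := by rw [hμ]; field_simp
  have hμ1 : μ ≠ 1 := by
    intro h
    rw [h, one_mul] at hmv
    -- mob P v = v leads to contradiction
    have hd := den_ne hP hv
    rw [mob, div_eq_iff hd] at hmv
    -- v - P = v * (conj P * v - 1)
    have key : (starRingEnd ℂ) P * v + P * (starRingEnd ℂ) v = 2 := by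
      linear_combination (-(starRingEnd ℂ) v) * hmv + (2 - (starRingEnd ℂ) P * v) * hv1
    have h4 : (starRingEnd ℂ) P * v + (starRingEnd ℂ) ((starRingEnd ℂ) P * v) = 2 := by
      rw [map_mul, Complex.conj_conj]; exact key
    rw [Complex.add_conj] at h4
    have h5 : 2 * ((starRingEnd ℂ) P * v).re = 2 := by exact_mod_cast h4
    have hle : ((starRingEnd ℂ) P * v).re ≤ ‖P‖ := by
      calc ((starRingEnd ℂ) P * v).re ≤ ‖(starRingEnd ℂ) P * v‖ := Complex.re_le_norm _
        _ = ‖P‖ := by rw [norm_mul, Complex.norm_conj, hv, mul_one]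
    linarith
  obtain ⟨s₀, hs1, hs2, hs3⟩ := exists_s0 hμabs hμ1
  have hset : {s : ℝ | 0 < s ∧ s ≤ 2 * π ∧
      IsTangent {P} v (v * Complex.exp (s * Complex.I))} = {s₀} := by
    ext s
    simp only [mem_setOf_eq, mem_singleton_iff]
    constructor
    · rintro ⟨h1, h2, h3⟩
      rw [isTangent_singleton_iff hPv, mem_line_iff_eq_mob hP hv (by
        rw [norm_mul, hv, one_mul, Complex.norm_exp]
        simp)] at h3
      have hexp : Complex.exp (s * Complex.I) = μ := by
        have h6 := h3
        rw [hmv] at h6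
        exact mul_left_cancel₀ hv0 (h6.trans (mul_comm μ v))
      exact exp_mul_I_inj h1 h2 hs1 (le_of_lt hs2) (hexp.trans hs3.symm)
    · rintro rfl
      refine ⟨hs1, le_of_lt hs2, ?_⟩
      rw [isTangent_singleton_iff hPv, mem_line_iff_eq_mob hP hv (by
        rw [norm_mul, hv, one_mul, Complex.norm_exp]
        simp)]
      rw [hs3, hmv, mul_comm]
  rw [psi, hset, csInf_singleton, hs3, hmv, mul_comm]

lemma projS1_abs (x : ℝ) : ‖projS1 x‖ = 1 := by
  rw [projS1]
  rw [Complex.norm_exp]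
  have : ((2:ℂ) * π * x * Complex.I).re = 0 := by simp
  rw [this, Real.exp_zero]

lemma projS1_ne_zero (x : ℝ) : projS1 x ≠ 0 := Complex.exp_ne_zero _

lemma projS1_add_one (x : ℝ) : projS1 (x + 1) = projS1 x := by
  rw [projS1, projS1]
  push_cast
  rw [show (2:ℂ) * π * (x + 1) * Complex.I = 2 * π * x * Complex.I + 2 * π * Complex.I by ring,
    Complex.exp_add, Complex.exp_two_pi_mul_I, mul_one]

lemma projS1_eq_iff {a b : ℝ} : projS1 a = projS1 b ↔ ∃ n : ℤ, a = b + n := by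
  rw [projS1, projS1, Complex.exp_eq_exp_iff_exists_int]
  constructor
  · rintro ⟨n, hn⟩
    refine ⟨n, ?_⟩
    have him := congrArg Complex.im hn
    simp only [Complex.mul_im, Complex.mul_re, Complex.I_im, Complex.I_re, Complex.ofReal_im,
      Complex.ofReal_re, Complex.add_im, Complex.intCast_im, Complex.intCast_re,
      Complex.re_ofReal_mul, Complex.re_ofNat, Complex.im_ofNat] at him
    ring_nf at him
    have hpi := Real.pi_pos
    nlinarith [him]
  · rintro ⟨n, rfl⟩
    exact ⟨n, by push_cast; ring⟩

/-- explicit lift of `mob P` -/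
def Gl (P : ℂ) (x : ℝ) : ℝ :=
  x + 1 / 2 - (Complex.log (1 - (starRingEnd ℂ) P * projS1 x)).im / π

lemma w_re_pos {P v : ℂ} (hP : ‖P‖ < 1) (hv : ‖v‖ = 1) :
    0 < (1 - (starRingEnd ℂ) P * v).re := by
  have h1 : ((starRingEnd ℂ) P * v).re ≤ ‖P‖ := by
    calc ((starRingEnd ℂ) P * v).re ≤ ‖(starRingEnd ℂ) P * v‖ := Complex.re_le_norm _
      _ = ‖P‖ := by rw [norm_mul, Complex.norm_conj, hv, mul_one]
  have : (1 - (starRingEnd ℂ) P * v).re = 1 - ((starRingEnd ℂ) P * v).re := by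
    rw [Complex.sub_re, Complex.one_re]
  rw [this]
  linarith

lemma w_mem_slit {P v : ℂ} (hP : ‖P‖ < 1) (hv : ‖v‖ = 1) :
    (1 - (starRingEnd ℂ) P * v) ∈ Complex.slitPlane := Or.inl (w_re_pos hP hv)

lemma w_ne_zero {P v : ℂ} (hP : ‖P‖ < 1) (hv : ‖v‖ = 1) :
    (1 : ℂ) - (starRingEnd ℂ) P * v ≠ 0 := Complex.slitPlane_ne_zero (w_mem_slit hP hv)

lemma mob_eq_conj_div {P v : ℂ} (hP : ‖P‖ < 1) (hv : ‖v‖ = 1) :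
    mob P v = -v * (starRingEnd ℂ) (1 - (starRingEnd ℂ) P * v) / (1 - (starRingEnd ℂ) P * v) := by
  have hv1 := v_mul_conj hv
  have hd := den_ne hP hv
  have hw := w_ne_zero hP hv
  rw [mob, map_sub, map_one, map_mul, Complex.conj_conj]
  rw [div_eq_div_iff hd hw]
  linear_combination (1 - (starRingEnd ℂ) P * v) * P * hv1

lemma conj_div_self {w : ℂ} (hw : w ≠ 0) :
    (starRingEnd ℂ) w / w = Complex.exp ((-(2 * w.arg) : ℝ) * Complex.I) := by
  have habs : (‖w‖ : ℂ) ≠ 0 := by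
    simpa using (norm_ne_zero_iff).mpr hw
  conv_lhs => rw [← Complex.norm_mul_exp_arg_mul_I w]
  rw [map_mul, Complex.conj_ofReal, ← Complex.exp_conj]
  have hc : (starRingEnd ℂ) ((w.arg : ℂ) * Complex.I) = (-w.arg : ℝ) * Complex.I := by
    rw [map_mul, Complex.conj_ofReal, Complex.conj_I]
    push_cast
    ring
  rw [hc, mul_div_mul_left _ _ habs, ← Complex.exp_sub]
  congr 1
  push_cast
  ring

lemma projS1_Gl {P : ℂ} (hP : ‖P‖ < 1) (x : ℝ) :
    projS1 (Gl P x) = mob P (projS1 x) := by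
  set v := projS1 x with hv
  have hvabs : ‖v‖ = 1 := projS1_abs x
  set w : ℂ := 1 - (starRingEnd ℂ) P * v with hwdef
  have hw0 : w ≠ 0 := w_ne_zero hP hvabs
  have hpi := Real.pi_ne_zero
  have hsplit : (2 * (π:ℂ) * ((Gl P x : ℝ) : ℂ) * Complex.I)
      = 2 * π * x * Complex.I + π * Complex.I + ((-(2 * w.arg) : ℝ) : ℂ) * Complex.I := by
    rw [Gl, Complex.log_im]
    push_cast
    have : ((2:ℂ) * π) * (↑x + 1/2 - ↑w.arg / ↑π) = 2*π*x + π - 2*w.arg := by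
      have hπ : ((π:ℝ):ℂ) ≠ 0 := Complex.ofReal_ne_zero.mpr hpi
      field_simp
    rw [show (2:ℂ) * ↑π * (↑x + 1/2 - ↑w.arg / ↑π) * Complex.I
        = ((2:ℂ) * ↑π * (↑x + 1/2 - ↑w.arg / ↑π)) * Complex.I by ring, this]
    ring
  rw [projS1, hsplit, Complex.exp_add, Complex.exp_add, Complex.exp_pi_mul_I,
    ← conj_div_self hw0, mob_eq_conj_div hP hvabs, ← hwdef]
  rw [show Complex.exp (2 * ↑π * ↑x * Complex.I) = v from rfl]
  ring

lemma deriv_value {P v : ℂ} (hP : ‖P‖ < 1) (hv : ‖v‖ = 1) :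
    1 - (-((starRingEnd ℂ) P * (2 * (π:ℂ) * Complex.I * v)) / (1 - (starRingEnd ℂ) P * v)).im / π
      = (1 - Complex.normSq P) / Complex.normSq (1 - (starRingEnd ℂ) P * v) := by
  have hv0 : v ≠ 0 := by intro h; rw [h] at hv; simp at hv
  have hv1 := v_mul_conj hv
  have he : (starRingEnd ℂ) v = v⁻¹ := by
    apply eq_inv_of_mul_eq_one_left; rw [mul_comm]; exact hv1
  have hw0 : (1:ℂ) - (starRingEnd ℂ) P * v ≠ 0 := w_ne_zero hP hv
  have hcw : (starRingEnd ℂ) (1 - (starRingEnd ℂ) P * v) = 1 - P * v⁻¹ := by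
    rw [map_sub, map_one, map_mul, Complex.conj_conj, he]
  have hwc0 : (1:ℂ) - P * v⁻¹ ≠ 0 := by
    intro h
    rw [← hcw, map_eq_zero] at h
    exact hw0 h
  have hpi := Real.pi_ne_zero
  have him : (-((starRingEnd ℂ) P * (2 * (π:ℂ) * Complex.I * v))
        / (1 - (starRingEnd ℂ) P * v)).im
      = -2 * π * ((starRingEnd ℂ) P * v / (1 - (starRingEnd ℂ) P * v)).re := by
    have e1 : -((starRingEnd ℂ) P * (2 * (π:ℂ) * Complex.I * v)) / (1 - (starRingEnd ℂ) P * v)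
        = ((-2 * π : ℝ) : ℂ)
            * (Complex.I * ((starRingEnd ℂ) P * v / (1 - (starRingEnd ℂ) P * v))) := by
      push_cast
      ring
    rw [e1, Complex.im_ofReal_mul]
    congr 1
    simp [Complex.mul_im]
  rw [him]
  have key : (((1 - Complex.normSq P) / Complex.normSq (1 - (starRingEnd ℂ) P * v) : ℝ) : ℂ)
      = 1 + ((starRingEnd ℂ) P * v / (1 - (starRingEnd ℂ) P * v))
        + (starRingEnd ℂ) ((starRingEnd ℂ) P * v / (1 - (starRingEnd ℂ) P * v)) := by
    have hcw2 : (starRingEnd ℂ) (1 - (starRingEnd ℂ) P * v) = 1 - P * (starRingEnd ℂ) v := by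
      rw [map_sub, map_one, map_mul, Complex.conj_conj]
    have hwc2 : (1:ℂ) - P * (starRingEnd ℂ) v ≠ 0 := by
      intro h
      rw [← hcw2, map_eq_zero] at h
      exact hw0 h
    rw [map_div₀, map_mul, Complex.conj_conj, hcw2]
    rw [Complex.ofReal_div,
      div_eq_iff (Complex.ofReal_ne_zero.mpr (ne_of_gt (Complex.normSq_pos.mpr hw0)))]
    push_cast
    rw [← Complex.mul_conj (z := 1 - (starRingEnd ℂ) P * v), ← Complex.mul_conj (z := P), hcw2]
    field_simp [hw0, hwc2]
    linear_combination P * (starRingEnd ℂ) P * hv1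
  have keyre := congrArg Complex.re key
  rw [Complex.ofReal_re] at keyre
  simp only [Complex.add_re, Complex.one_re, Complex.conj_re] at keyre
  rw [keyre]
  field_simp
  ring

lemma hasDerivAt_Gl {P : ℂ} (hP : ‖P‖ < 1) (x : ℝ) :
    HasDerivAt (Gl P)
      ((1 - Complex.normSq P) / Complex.normSq (1 - (starRingEnd ℂ) P * projS1 x)) x := by
  have hvabs : ‖projS1 x‖ = 1 := projS1_abs x
  have h1 : HasDerivAt (fun y : ℝ => (y : ℂ)) 1 x := Complex.ofRealCLM.hasDerivAt
  have h2 : HasDerivAt (fun y : ℝ => 2 * (π:ℂ) * (y:ℝ) * Complex.I)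
      (2 * (π:ℂ) * Complex.I) x := by
    have := (h1.const_mul (2 * (π:ℂ))).mul_const Complex.I
    simpa using this
  have h3 : HasDerivAt projS1 (2 * (π:ℂ) * Complex.I * projS1 x) x := by
    have h := h2.cexp
    have hfn : projS1 = fun y : ℝ => Complex.exp (2 * (π:ℂ) * (y:ℝ) * Complex.I) := rfl
    rw [hfn]
    convert h using 1
    show 2 * (π:ℂ) * Complex.I * Complex.exp (2 * (π:ℂ) * (x:ℝ) * Complex.I)
        = Complex.exp (2 * (π:ℂ) * (x:ℝ) * Complex.I) * (2 * (π:ℂ) * Complex.I)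
    ring
  have h4 : HasDerivAt (fun y : ℝ => 1 - (starRingEnd ℂ) P * projS1 y)
      (-((starRingEnd ℂ) P * (2 * (π:ℂ) * Complex.I * projS1 x))) x :=
    (h3.const_mul ((starRingEnd ℂ) P)).const_sub 1
  have h5 : HasDerivAt (fun y : ℝ => Complex.log (1 - (starRingEnd ℂ) P * projS1 y))
      (-((starRingEnd ℂ) P * (2 * (π:ℂ) * Complex.I * projS1 x))
        / (1 - (starRingEnd ℂ) P * projS1 x)) x :=
    h4.clog_real (w_mem_slit hP hvabs)
  have h6 : HasDerivAt (fun y : ℝ => (Complex.log (1 - (starRingEnd ℂ) P * projS1 y)).im)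
      ((-((starRingEnd ℂ) P * (2 * (π:ℂ) * Complex.I * projS1 x))
        / (1 - (starRingEnd ℂ) P * projS1 x)).im) x :=
    Complex.imCLM.hasFDerivAt.comp_hasDerivAt x h5
  have h7 : HasDerivAt (Gl P)
      (1 - ((-((starRingEnd ℂ) P * (2 * (π:ℂ) * Complex.I * projS1 x))
        / (1 - (starRingEnd ℂ) P * projS1 x)).im) / π) x :=
    ((hasDerivAt_id x).add_const (1/2 : ℝ)).sub (h6.div_const π)
  rw [← deriv_value hP hvabs]
  exact h7

lemma Gl_add_one {P : ℂ} (x : ℝ) : Gl P (x + 1) = Gl P x + 1 := by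
  rw [Gl, Gl, projS1_add_one]
  ring

lemma strictMono_Gl {P : ℂ} (hP : ‖P‖ < 1) : StrictMono (Gl P) := by
  have hP2 : Complex.normSq P < 1 := by
    rw [Complex.normSq_eq_norm_sq]
    nlinarith [norm_nonneg P]
  apply strictMono_of_deriv_pos
  intro x
  rw [(hasDerivAt_Gl hP x).deriv]
  have h1 : 0 < Complex.normSq (1 - (starRingEnd ℂ) P * projS1 x) :=
    Complex.normSq_pos.mpr (w_ne_zero hP (projS1_abs x))
  have h2 : 0 < 1 - Complex.normSq P := by linarith
  positivity

lemma dist_ratio {P v : ℂ} (hP : ‖P‖ < 1) (hv : ‖v‖ = 1) :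
    dist P (mob P v) / dist v P
      = (1 - Complex.normSq P) / Complex.normSq (1 - (starRingEnd ℂ) P * v) := by
  have hv1 := v_mul_conj hv
  have hd := den_ne hP hv
  have hP2 : Complex.normSq P < 1 := by
    rw [Complex.normSq_eq_norm_sq]
    nlinarith [norm_nonneg P]
  have hnum : P - mob P v = v * ((Complex.normSq P : ℂ) - 1) / ((starRingEnd ℂ) P * v - 1) := by
    rw [mob, ← Complex.mul_conj (z := P)]
    rw [eq_div_iff hd, sub_mul, div_mul_cancel₀ _ hd]
    ring
  have h1 : dist P (mob P v) = (1 - Complex.normSq P) / ‖(starRingEnd ℂ) P * v - 1‖ := by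
    rw [Complex.dist_eq, hnum, norm_div, norm_mul, hv, one_mul]
    congr 1
    rw [show (Complex.normSq P : ℂ) - 1 = ((Complex.normSq P - 1 : ℝ) : ℂ) by push_cast; ring,
      Complex.norm_real, Real.norm_eq_abs, abs_of_neg (by linarith)]
    ring
  have h2 : dist v P = ‖(starRingEnd ℂ) P * v - 1‖ := by
    rw [Complex.dist_eq, abs_sub_conj hv]
  rw [h1, h2, div_div]
  congr 1
  rw [← Complex.sq_norm, ← norm_sub_rev 1]
  ring

lemma lift_rigid' (F : CircleDeg1Lift) (G : ℝ → ℝ) (hmono : StrictMono G)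
    (hper : ∀ x, G (x + 1) = G x + 1)
    (heq : ∀ x, projS1 ((F : ℝ → ℝ) x) = projS1 (G x)) :
    ∃ c : ℤ, ∀ x, (F : ℝ → ℝ) x = G x + c := by
  have hk : ∀ x, ∃ n : ℤ, (F : ℝ → ℝ) x = G x + n := fun x => projS1_eq_iff.mp (heq x)
  choose k hkk using hk
  have hper' : ∀ x, k (x + 1) = k x := by
    intro x
    have h1 : G (x + 1) + (k (x + 1) : ℝ) = G x + (k x : ℝ) + 1 := by
      rw [← hkk, F.map_add_one, hkk]
    rw [hper x] at h1
    have h2 : ((k (x + 1) : ℝ)) = (k x : ℝ) := by linarith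
    exact_mod_cast h2
  have hperiod : Function.Periodic k 1 := hper'
  have hint : ∀ (x : ℝ) (n : ℤ), k (x + n) = k x := by
    intro x n
    have h := (hperiod.int_mul n) x
    simpa using h
  have hconst : ∀ a b, k a = k b := by
    intro a b
    set n : ℤ := ⌊a - b⌋ + 1 with hn
    have hb1 : a < b + n := by
      have := Int.lt_floor_add_one (a - b)
      push_cast [hn]
      linarith
    have hb2 : b + (n : ℝ) ≤ a + 1 := by
      have := Int.floor_le (a - b)
      push_cast [hn]
      linarith
    have hkb : k (b + n) = k b := hint b n
    rcases eq_or_lt_of_le hb2 with hcase | hcase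
    · have h3 : k (b + (n : ℝ)) = k (a + 1) := by rw [hcase]
      rw [hper' a] at h3
      rw [← hkb, h3]
    · have m1 : (F : ℝ → ℝ) a ≤ (F : ℝ → ℝ) (b + n) := F.mono (le_of_lt hb1)
      have m2 : (F : ℝ → ℝ) (b + n) ≤ (F : ℝ → ℝ) (a + 1) := F.mono (le_of_lt hcase)
      rw [hkk, hkk] at m1
      rw [hkk, F.map_add_one, hkk] at m2
      have g1 : G a < G (b + n) := hmono hb1
      have g2 : G (b + n) < G (a + 1) := hmono hcase
      rw [hper a] at g2
      have i1 : (k a : ℝ) - (k (b + (n:ℝ)) : ℝ) < 1 := by linarith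
      have i2 : (k (b + (n:ℝ)) : ℝ) - (k a : ℝ) < 1 := by linarith
      have i1' : k a - k (b + (n:ℝ)) < 1 := by exact_mod_cast i1
      have i2' : k (b + (n:ℝ)) - k a < 1 := by exact_mod_cast i2
      have h4 : k a = k (b + (n:ℝ)) := by omega
      rw [h4, hkb]
  exact ⟨k 0, fun x => by rw [hkk x, hconst x 0]⟩

/-- For a point `P` of the open unit disk, the circle map `ψ_P` is
differentiable at every `v ∈ S¹` (through its lift to `ℝ`), with derivative
`|P ψ_P(v)| / |v P|`. -/
theorem psi_point_hasDerivAt (P : ℂ) (hP : P ∈ unitDisk)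
    (F : CircleDeg1Lift) (hF : IsNormalizedLift (psi {P}) F) :
    ∀ v ∈ unitCircle, ∀ x : ℝ, projS1 x = v →
      HasDerivAt (F : ℝ → ℝ) (dist P (psi {P} v) / dist v P) x := by
  intro v hv x hx
  have hP1 : ‖P‖ < 1 := hP
  obtain ⟨c, hc⟩ := lift_rigid' F (Gl P) (strictMono_Gl hP1) (fun y => Gl_add_one y)
    (fun y => by rw [← hF.1 y, psi_point_eq hP1 (projS1_abs y), projS1_Gl hP1 y])
  have hFfun : (F : ℝ → ℝ) = fun y => Gl P y + (c : ℝ) := funext hc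
  rw [hFfun]
  subst hx
  rw [psi_point_eq hP1 (projS1_abs x), dist_ratio hP1 (projS1_abs x)]
  exact (hasDerivAt_Gl hP1 x).add_const (c : ℝ)
end
end

section
/- Let v₁ = (0,1) and v₂ = (0,−1) on S¹, and let k > 0. Then the set of points P ∈ D whose hyperbolic distance (in the Beltrami–Klein model) from P to the line v₁v₂ equals k is exactly { (x,y) ∈ D : ((e^{2k}+1)/(e^{2k}−1))² x² + y² = 1 }. -/
open Real Set

noncomputable section

/-- The hyperbolic distance `d'(P,Q)` in the Beltrami–Klein model:
`(1/2)|log(|v₁Q||v₂P|/(|v₁P||v₂Q|))|` where `v₁, v₂` are the intersections of the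
line `PQ` with the unit circle. -/
def dK (P Q : ℂ) : ℝ :=
  sInf {d : ℝ | ∃ v₁ v₂ : ℂ, v₁ ∈ unitCircle ∧ v₂ ∈ unitCircle ∧ v₁ ≠ v₂ ∧
    v₁ ∈ lineThrough P Q ∧ v₂ ∈ lineThrough P Q ∧
    d = (1 / 2) * |Real.log ((dist v₁ Q * dist v₂ P) / (dist v₁ P * dist v₂ Q))|}

/-- `δ(P,Q,R)`: the hyperbolic distance from `R` to the hyperbolic line `PQ`
(the minimum of `d'(R,S)` over points `S` of the line `PQ` inside the disk). -/
def deltaK (P Q R : ℂ) : ℝ := sInf (dK R '' (lineThrough P Q ∩ unitDisk))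

/-- `Δ'ₙ(P,Q) = log((e^{n d'(P,Q)} + 1)/(e^{n d'(P,Q)} − 1))`. -/
def Delta' (n : ℕ) (P Q : ℂ) : ℝ :=
  Real.log ((Real.exp (n * dK P Q) + 1) / (Real.exp (n * dK P Q) - 1))

/-- The (closed) triangle with vertices `P`, `Q`, `R`. -/
def triangleSet (P Q R : ℂ) : Set ℂ := convexHull ℝ {P, Q, R}

lemma abs_eq_one_iff_normSq (z : ℂ) : ‖z‖ = 1 ↔ Complex.normSq z = 1 := by
  rw [← Complex.sq_norm]
  constructor
  · intro h; rw [h]; norm_num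
  · intro h; nlinarith [norm_nonneg z]

set_option maxHeartbeats 1000000 in
lemma normSq_lt_one_of_abs {z : ℂ} (h : ‖z‖ < 1) : Complex.normSq z < 1 := by
  have h2 := Complex.sq_norm z
  nlinarith [norm_nonneg z]

set_option maxHeartbeats 2000000 in
lemma dK_formula (P Q : ℂ) (A B C : ℝ)
    (hA : A = (Q.re - P.re)^2 + (Q.im - P.im)^2)
    (hB : B = 2*(P.re*(Q.re - P.re) + P.im*(Q.im - P.im)))
    (hC : C = P.re^2 + P.im^2 - 1)
    (hP : ‖P‖ < 1) (hQ : ‖Q‖ < 1) (hne : P ≠ Q) :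
    dK P Q = (1/2) * Real.log ((-B - 2*C + Real.sqrt (B^2 - 4*A*C)) /
        (-B - 2*C - Real.sqrt (B^2 - 4*A*C)))
    ∧ Real.sqrt (B^2 - 4*A*C) < -B - 2*C := by
  have hA0 : 0 < A := by
    rcases lt_or_eq_of_le (by rw [hA]; positivity : (0:ℝ) ≤ A) with h | h
    · exact h
    · exfalso; apply hne; apply Complex.ext <;> nlinarith [sq_nonneg (Q.re - P.re), sq_nonneg (Q.im - P.im)]
  have hC0 : C < 0 := by
    have := normSq_lt_one_of_abs hP; rw [Complex.normSq_apply] at this; nlinarith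
  have hABC : A + B + C < 0 := by
    have := normSq_lt_one_of_abs hQ; rw [Complex.normSq_apply] at this; nlinarith
  have hdisc : 0 < B^2 - 4*A*C := by nlinarith
  set d := Real.sqrt (B^2 - 4*A*C) with hddef
  have hd2 : d^2 = B^2 - 4*A*C := Real.sq_sqrt hdisc.le
  have hd0 : 0 < d := Real.sqrt_pos.2 hdisc
  have h2A : (0:ℝ) < 2*A := by linarith
  obtain ⟨t₁, t₂, ht12, hfac, he1, he2⟩ :
      ∃ t₁ t₂ : ℝ, t₁ < t₂ ∧ (∀ t : ℝ, A*t^2 + B*t + C = A*(t - t₁)*(t - t₂)) ∧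
        -B - 2*C + d = 2*A*((1 - t₁)*t₂) ∧ -B - 2*C - d = 2*A*((-t₁)*(t₂ - 1)) := by
    refine ⟨(-B - d)/(2*A), (-B + d)/(2*A), ?_, ?_, ?_, ?_⟩
    · rw [div_lt_div_iff₀ h2A h2A]; nlinarith
    · intro t
      field_simp
      linear_combination hd2
    · field_simp
      linear_combination (-1) * hd2
    · field_simp
      linear_combination (-1) * hd2
  have hr1 : A*t₁^2 + B*t₁ + C = 0 := by rw [hfac t₁]; ring
  have hr2 : A*t₂^2 + B*t₂ + C = 0 := by rw [hfac t₂]; ring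
  have ht1neg : t₁ < 0 := by
    by_contra h
    push_neg at h
    nlinarith [hfac 0, mul_nonneg (mul_nonneg hA0.le h) (h.trans ht12.le)]
  have ht2one : 1 < t₂ := by
    by_contra h
    push_neg at h
    nlinarith [hfac 1, mul_nonneg (mul_nonneg hA0.le (by linarith : (0:ℝ) ≤ 1 - t₁)) (by linarith : (0:ℝ) ≤ 1 - t₂)]
  -- the parametrized line
  set w : ℝ → ℂ := fun t => P + (t:ℂ) * (Q - P) with hw
  have hwline : ∀ t, w t ∈ lineThrough P Q := fun t => ⟨t, by simp [hw, Complex.real_smul]⟩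
  have hQP : Q - P ≠ 0 := sub_ne_zero.2 (Ne.symm hne)
  have hnorm : ∀ t, Complex.normSq (w t) = A*t^2 + B*t + (C+1) := by
    intro t
    simp only [hw, Complex.normSq_apply, Complex.add_re, Complex.add_im, Complex.mul_re,
      Complex.mul_im, Complex.sub_re, Complex.sub_im, Complex.ofReal_re, Complex.ofReal_im,
      hA, hB, hC]
    ring
  have hcirc : ∀ t, (w t ∈ unitCircle ↔ A*t^2 + B*t + C = 0) := by
    intro t
    show ‖w t‖ = 1 ↔ _
    rw [abs_eq_one_iff_normSq, hnorm t]
    constructor <;> intro h <;> linarith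
  have hchar : ∀ v, v ∈ lineThrough P Q → v ∈ unitCircle → (v = w t₁ ∨ v = w t₂) := by
    rintro v ⟨t, rfl⟩ hv
    have hv' : w t ∈ unitCircle := by
      rw [show w t = P + t • (Q - P) from by simp [hw, Complex.real_smul]]
      exact hv
    have h0 : A*(t - t₁)*(t - t₂) = 0 := by rw [← hfac]; exact (hcirc t).1 hv'
    have hveq : P + t • (Q - P) = w t := by simp [hw, Complex.real_smul]
    rcases mul_eq_zero.1 h0 with h | h
    · rcases mul_eq_zero.1 h with h | h
      · exact absurd h hA0.ne'
      · left; rw [hveq, sub_eq_zero.1 h]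
    · right; rw [hveq, sub_eq_zero.1 h]
  have winj : w t₁ ≠ w t₂ := by
    intro h
    have h1 : (t₁:ℂ) * (Q - P) = (t₂:ℂ) * (Q - P) := add_left_cancel h
    have h2 : (t₁:ℂ) = (t₂:ℂ) := mul_right_cancel₀ hQP h1
    exact ht12.ne (by exact_mod_cast h2)
  have hsA : (0:ℝ) < Real.sqrt A := Real.sqrt_pos.2 hA0
  have habsQP : ‖Q - P‖ = Real.sqrt A := by
    rw [Complex.norm_def]
    congr 1
    rw [Complex.normSq_apply, Complex.sub_re, Complex.sub_im, hA]
    ring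
  have hdistP : ∀ t, dist (w t) P = |t| * Real.sqrt A := by
    intro t
    rw [Complex.dist_eq]
    have : w t - P = (t:ℂ) * (Q - P) := by rw [hw]; ring
    rw [this, norm_mul, Complex.norm_real, Real.norm_eq_abs, habsQP]
  have hdistQ : ∀ t, dist (w t) Q = |t - 1| * Real.sqrt A := by
    intro t
    rw [Complex.dist_eq]
    have : w t - Q = ((t - 1 : ℝ):ℂ) * (Q - P) := by rw [hw]; push_cast; ring
    rw [this, norm_mul, Complex.norm_real, Real.norm_eq_abs, habsQP]
  have hne1 : t₁ ≠ 0 := ht1neg.ne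
  have hne2 : t₂ ≠ 0 := (by linarith : (0:ℝ) < t₂).ne'
  have hne3 : t₂ - 1 ≠ 0 := (by linarith : (0:ℝ) < t₂ - 1).ne'
  have hne4 : (1:ℝ) - t₁ ≠ 0 := (by linarith : (0:ℝ) < 1 - t₁).ne'
  have hne5 : t₁ - 1 ≠ 0 := (by linarith : t₁ - 1 < 0).ne
  have hsA' : Real.sqrt A ≠ 0 := hsA.ne'
  set R := ((1 - t₁)*t₂)/((-t₁)*(t₂ - 1)) with hRdef
  have hnum : (0:ℝ) < (1 - t₁)*t₂ := by nlinarith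
  have hden : (0:ℝ) < (-t₁)*(t₂ - 1) := by nlinarith
  have hR1 : 1 < R := by
    rw [hRdef, lt_div_iff₀ hden]
    nlinarith
  have hRpos : 0 < R := lt_trans one_pos hR1
  have hlogR : (0:ℝ) ≤ Real.log R := Real.log_nonneg hR1.le
  have hc1 : w t₁ ∈ unitCircle := (hcirc t₁).2 hr1
  have hc2 : w t₂ ∈ unitCircle := (hcirc t₂).2 hr2
  have hset : {d : ℝ | ∃ v₁ v₂ : ℂ, v₁ ∈ unitCircle ∧ v₂ ∈ unitCircle ∧ v₁ ≠ v₂ ∧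
      v₁ ∈ lineThrough P Q ∧ v₂ ∈ lineThrough P Q ∧
      d = (1 / 2) * |Real.log ((dist v₁ Q * dist v₂ P) / (dist v₁ P * dist v₂ Q))|}
      = {(1/2) * Real.log R} := by
    ext x
    simp only [Set.mem_setOf_eq, Set.mem_singleton_iff]
    constructor
    · rintro ⟨v₁, v₂, hvc1, hvc2, hvne, hvl1, hvl2, rfl⟩
      rcases hchar v₁ hvl1 hvc1 with rfl | rfl <;> rcases hchar v₂ hvl2 hvc2 with rfl | rfl
      · exact absurd rfl hvne
      · rw [hdistQ, hdistP, hdistP, hdistQ]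
        rw [abs_of_nonpos (by linarith : t₁ - 1 ≤ 0), abs_of_nonneg (by linarith : (0:ℝ) ≤ t₂),
          abs_of_nonpos (by linarith : t₁ ≤ 0), abs_of_nonneg (by linarith : (0:ℝ) ≤ t₂ - 1)]
        have heq : -(t₁ - 1) * Real.sqrt A * (t₂ * Real.sqrt A) /
            (-t₁ * Real.sqrt A * ((t₂ - 1) * Real.sqrt A)) = R := by
          rw [hRdef]; field_simp [hne1, hne2, hne3, hne4, hne5, hsA']; ring
        rw [heq, abs_of_nonneg hlogR]
      · rw [hdistQ, hdistP, hdistP, hdistQ]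
        rw [abs_of_nonneg (by linarith : (0:ℝ) ≤ t₂ - 1), abs_of_nonpos (by linarith : t₁ ≤ 0),
          abs_of_nonneg (by linarith : (0:ℝ) ≤ t₂), abs_of_nonpos (by linarith : t₁ - 1 ≤ 0)]
        have heq : (t₂ - 1) * Real.sqrt A * (-t₁ * Real.sqrt A) /
            (t₂ * Real.sqrt A * (-(t₁ - 1) * Real.sqrt A)) = R⁻¹ := by
          rw [hRdef]; field_simp [hne1, hne2, hne3, hne4, hne5, hsA']; ring
        rw [heq, Real.log_inv, abs_neg, abs_of_nonneg hlogR]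
      · exact absurd rfl hvne
    · intro hx
      refine ⟨w t₁, w t₂, hc1, hc2, winj, hwline t₁, hwline t₂, ?_⟩
      rw [hx, hdistQ, hdistP, hdistP, hdistQ]
      rw [abs_of_nonpos (by linarith : t₁ - 1 ≤ 0), abs_of_nonneg (by linarith : (0:ℝ) ≤ t₂),
        abs_of_nonpos (by linarith : t₁ ≤ 0), abs_of_nonneg (by linarith : (0:ℝ) ≤ t₂ - 1)]
      have heq : -(t₁ - 1) * Real.sqrt A * (t₂ * Real.sqrt A) /
          (-t₁ * Real.sqrt A * ((t₂ - 1) * Real.sqrt A)) = R := by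
        rw [hRdef]; field_simp [hne1, hne2, hne3, hne4, hne5, hsA']; ring
      rw [heq, abs_of_nonneg hlogR]
  have hdKval : dK P Q = (1/2) * Real.log R := by
    unfold dK
    rw [hset, csInf_singleton]
  constructor
  · rw [hdKval, hRdef]
    congr 2
    rw [he1, he2, mul_div_mul_left _ _ (by linarith : (2*A) ≠ 0)]
  · nlinarith [he2]

lemma lineI : lineThrough Complex.I (-Complex.I) = {p : ℂ | p.re = 0} := by
  ext p
  simp only [lineThrough, Set.mem_setOf_eq]
  constructor
  · rintro ⟨t, rfl⟩
    simp [Complex.real_smul]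
  · intro h
    refine ⟨(1 - p.im)/2, ?_⟩
    apply Complex.ext
    · simp [Complex.real_smul, h]
    · simp [Complex.real_smul]
      ring

lemma abs_of_re_zero (p : ℂ) (h : p.re = 0) : ‖p‖ = |p.im| := by
  rw [Complex.norm_def, Complex.normSq_apply, h]
  rw [show (0:ℝ)*0 + p.im*p.im = p.im^2 by ring, Real.sqrt_sq_eq_abs]

lemma sqrt_four_mul (g : ℝ) (hg : 0 ≤ g) : Real.sqrt (4*g) = 2 * Real.sqrt g := by
  rw [show (4:ℝ)*g = 2^2*g by ring, Real.sqrt_mul (by positivity), Real.sqrt_sq (by norm_num)]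

lemma dK_axis (z : ℂ) (hz : ‖z‖ < 1) (hx : z.re ≠ 0) (s : ℝ) (hs : |s| < 1) :
    Real.sqrt ((1 - s^2)*z.re^2 + (s - z.im)^2) < 1 - z.im*s ∧
    dK z ((s:ℂ)*Complex.I) = (1/2) * Real.log
      ((1 - z.im*s + Real.sqrt ((1 - s^2)*z.re^2 + (s - z.im)^2)) /
       (1 - z.im*s - Real.sqrt ((1 - s^2)*z.re^2 + (s - z.im)^2))) := by
  set Q : ℂ := (s:ℂ)*Complex.I with hQ
  have hQre : Q.re = 0 := by simp [hQ]
  have hQim : Q.im = s := by simp [hQ]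
  have hQabs : ‖Q‖ < 1 := by
    rw [abs_of_re_zero Q hQre, hQim]; exact hs
  have hne : z ≠ Q := fun h => hx (by rw [h, hQre])
  obtain ⟨hval, hlt⟩ := dK_formula z Q _ _ _ rfl rfl rfl hz hQabs hne
  rw [hQre, hQim] at hval hlt
  set g := (1 - s^2)*z.re^2 + (s - z.im)^2 with hg
  have hs2 : s^2 < 1 := (sq_lt_one_iff_abs_lt_one s).2 hs
  have hg0 : 0 ≤ g := by rw [hg]; nlinarith [sq_nonneg z.re, sq_nonneg (s - z.im)]
  have hdisc4 : (2*(z.re*(0 - z.re) + z.im*(s - z.im)))^2 -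
      4*((0 - z.re)^2 + (s - z.im)^2)*(z.re^2 + z.im^2 - 1) = 4*g := by
    rw [hg]; ring
  have hB2C : -(2*(z.re*(0 - z.re) + z.im*(s - z.im))) - 2*(z.re^2 + z.im^2 - 1)
      = 2*(1 - z.im*s) := by ring
  rw [hdisc4, hB2C, sqrt_four_mul g hg0] at hval hlt
  constructor
  · linarith
  · rw [hval]
    congr 1
    rw [show 2*(1 - z.im*s) + 2*Real.sqrt g = 2*((1 - z.im*s) + Real.sqrt g) by ring,
      show 2*(1 - z.im*s) - 2*Real.sqrt g = 2*((1 - z.im*s) - Real.sqrt g) by ring,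
      mul_div_mul_left _ _ (by norm_num : (2:ℝ) ≠ 0)]

lemma dK_nonneg (P Q : ℂ) : 0 ≤ dK P Q := by
  apply Real.sInf_nonneg
  rintro x ⟨v₁, v₂, _, _, _, _, _, rfl⟩
  positivity

lemma dK_self (P : ℂ) : dK P P = 0 := by
  unfold dK
  convert Real.sInf_empty
  rw [Set.eq_empty_iff_forall_notMem]
  rintro x ⟨v₁, v₂, _, _, hne, ⟨t₁, rfl⟩, ⟨t₂, h2⟩, _⟩
  apply hne
  rw [h2]
  simp

lemma deltaK_zero (z : ℂ) (hz : ‖z‖ < 1) (hx : z.re = 0) :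
    deltaK Complex.I (-Complex.I) z = 0 := by
  unfold deltaK
  refine IsLeast.csInf_eq ⟨⟨z, ⟨?_, hz⟩, dK_self z⟩, ?_⟩
  · rw [lineI]; exact hx
  · rintro b ⟨p, _, rfl⟩
    exact dK_nonneg z p

set_option maxHeartbeats 1000000 in
lemma deltaK_eval (z : ℂ) (hz : ‖z‖ < 1) (hx : z.re ≠ 0) :
    deltaK Complex.I (-Complex.I) z = (1/2) * Real.log
      ((1 - z.im^2 + Real.sqrt ((1 - z.im^2)*z.re^2)) /
       (1 - z.im^2 - Real.sqrt ((1 - z.im^2)*z.re^2))) := by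
  have hy : |z.im| < 1 := lt_of_le_of_lt (Complex.abs_im_le_norm z) hz
  have hy2 : z.im^2 < 1 := (sq_lt_one_iff_abs_lt_one z.im).2 hy
  have hin : z.re^2 + z.im^2 < 1 := by
    have := normSq_lt_one_of_abs hz
    rw [Complex.normSq_apply] at this; nlinarith
  have hyy := dK_axis z hz hx z.im hy
  rw [sub_self] at hyy
  rw [show (1 - z.im^2)*z.re^2 + (0:ℝ)^2 = (1 - z.im^2)*z.re^2 by ring,
      show 1 - z.im*z.im = 1 - z.im^2 by ring] at hyy
  have hyy1 : Real.sqrt ((1 - z.im^2)*z.re^2) < 1 - z.im^2 := by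
    have := hyy.1; nlinarith [this]
  unfold deltaK
  refine IsLeast.csInf_eq ⟨⟨(z.im:ℂ)*Complex.I, ⟨?_, ?_⟩, hyy.2⟩, ?_⟩
  · rw [lineI]; simp
  · show ‖_‖ < 1
    rw [abs_of_re_zero _ (by simp)]
    simpa using hy
  · rintro b ⟨p, ⟨hpl, hpd⟩, rfl⟩
    rw [lineI] at hpl
    have hpl' : p.re = 0 := hpl
    have hpd' : ‖p‖ < 1 := hpd
    have hps : |p.im| < 1 := by rw [← abs_of_re_zero p hpl]; exact hpd'
    have hpeq : ((p.im:ℂ))*Complex.I = p := by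
      apply Complex.ext <;> simp [hpl']
    have h2 := dK_axis z hz hx p.im hps
    rw [hpeq] at h2
    rw [h2.2]
    set s := p.im with hsdef
    set w := Real.sqrt ((1 - s^2)*z.re^2 + (s - z.im)^2) with hwdef
    set w0 := Real.sqrt ((1 - z.im^2)*z.re^2) with hw0def
    have hw0 : 0 ≤ w0 := Real.sqrt_nonneg _
    have hwnn : 0 ≤ w := Real.sqrt_nonneg _
    have hclt : w < 1 - z.im*s := h2.1
    have hc0 : w0 < 1 - z.im^2 := hyy1
    have hs2 : s^2 < 1 := (sq_lt_one_iff_abs_lt_one s).2 hps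
    have hw0sq : w0^2 = (1 - z.im^2)*z.re^2 :=
      Real.sq_sqrt (by nlinarith [sq_nonneg z.re])
    have hwsq : w^2 = (1 - s^2)*z.re^2 + (s - z.im)^2 :=
      Real.sq_sqrt (by nlinarith [sq_nonneg z.re, sq_nonneg (s - z.im)])
    have hkey : w0 * (1 - z.im*s) ≤ w * (1 - z.im^2) := by
      have h1 : (w0 * (1 - z.im*s))^2 ≤ (w * (1 - z.im^2))^2 := by
        rw [mul_pow, mul_pow, hw0sq, hwsq]
        nlinarith [mul_nonneg (sq_nonneg (s - z.im)) (by nlinarith : (0:ℝ) ≤ 1 - z.re^2 - z.im^2)]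
      have hbnn : 0 ≤ w * (1 - z.im^2) := by nlinarith
      nlinarith [h1, hbnn, mul_nonneg hw0 (by nlinarith : (0:ℝ) ≤ 1 - z.im*s)]
    apply mul_le_mul_of_nonneg_left _ (by norm_num : (0:ℝ) ≤ 1/2)
    apply Real.log_le_log (by apply div_pos <;> linarith)
    rw [div_le_div_iff₀ (by linarith) (by linarith)]
    nlinarith [hkey]


set_option maxHeartbeats 1000000 in
/-- For `v₁ = (0,1)`, `v₂ = (0,−1)` and `k > 0`, the set of points of `D`
at hyperbolic distance `k` from the line `v₁v₂` is the ellipse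
`((e^{2k}+1)/(e^{2k}−1))² x² + y² = 1` intersected with `D`. -/
theorem equidistant_set_from_diameter_eq_ellipse (k : ℝ) (hk : 0 < k) :
    {P : ℂ | P ∈ unitDisk ∧ deltaK Complex.I (-Complex.I) P = k} =
      {z : ℂ | z ∈ unitDisk ∧
        ((Real.exp (2 * k) + 1) / (Real.exp (2 * k) - 1)) ^ 2 * z.re ^ 2 + z.im ^ 2 = 1} := by
  have hE1 : 1 < Real.exp (2*k) := by
    rw [show (1:ℝ) = Real.exp 0 from (Real.exp_zero).symm]
    exact Real.exp_lt_exp.2 (by linarith)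
  set E := Real.exp (2*k) with hEdef
  have hEne : E - 1 ≠ 0 := by linarith
  have hEne' : E + 1 ≠ 0 := by linarith
  ext z
  simp only [Set.mem_setOf_eq]
  constructor
  · rintro ⟨hzd, hzk⟩
    refine ⟨hzd, ?_⟩
    have hz : ‖z‖ < 1 := hzd
    have hy2 : z.im^2 < 1 :=
      (sq_lt_one_iff_abs_lt_one z.im).2 (lt_of_le_of_lt (Complex.abs_im_le_norm z) hz)
    have hin : z.re^2 + z.im^2 < 1 := by
      have := normSq_lt_one_of_abs hz
      rw [Complex.normSq_apply] at this; nlinarith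
    by_cases hx : z.re = 0
    · exfalso; rw [deltaK_zero z hz hx] at hzk; linarith
    · rw [deltaK_eval z hz hx] at hzk
      set w0 := Real.sqrt ((1 - z.im^2)*z.re^2) with hw0def
      have hw0 : 0 ≤ w0 := Real.sqrt_nonneg _
      have hw0sq : w0^2 = (1 - z.im^2)*z.re^2 :=
        Real.sq_sqrt (by nlinarith [sq_nonneg z.re])
      have hw0lt : w0 < 1 - z.im^2 := by
        nlinarith [sq_nonneg z.re, sq_nonneg z.im]
      have hrpos : 0 < (1 - z.im^2 + w0)/(1 - z.im^2 - w0) :=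
        div_pos (by linarith) (by linarith)
      have hl : Real.log ((1 - z.im^2 + w0)/(1 - z.im^2 - w0)) = 2*k := by linarith
      have hcross : 1 - z.im^2 + w0 = E*(1 - z.im^2 - w0) := by
        have h0 : (1 - z.im^2 + w0)/(1 - z.im^2 - w0) = E := by
          rw [← Real.exp_log hrpos, hl]
        exact (div_eq_iff (by linarith : (1 - z.im^2 - w0) ≠ 0)).1 h0
      have h3 : w0*(E+1) = (1 - z.im^2)*(E-1) := by linear_combination hcross
      have h4 : (w0*(E+1))^2 = ((1 - z.im^2)*(E-1))^2 := by rw [h3]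
      rw [mul_pow, mul_pow, hw0sq] at h4
      have hc0ne : (1:ℝ) - z.im^2 ≠ 0 := by linarith
      have h5 : z.re^2*(E+1)^2 = (1 - z.im^2)*(E-1)^2 := by
        apply mul_left_cancel₀ hc0ne
        linear_combination h4
      field_simp
      linear_combination h5
  · rintro ⟨hzd, heq⟩
    refine ⟨hzd, ?_⟩
    have hz : ‖z‖ < 1 := hzd
    have hy2 : z.im^2 < 1 :=
      (sq_lt_one_iff_abs_lt_one z.im).2 (lt_of_le_of_lt (Complex.abs_im_le_norm z) hz)
    have hin : z.re^2 + z.im^2 < 1 := by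
      have := normSq_lt_one_of_abs hz
      rw [Complex.normSq_apply] at this; nlinarith
    have hc0ne : (1:ℝ) - z.im^2 ≠ 0 := by linarith
    have hx : z.re ≠ 0 := by
      intro h
      rw [h] at heq
      nlinarith [heq]
    have h5 : z.re^2*(E+1)^2 = (1 - z.im^2)*(E-1)^2 := by
      field_simp at heq
      linear_combination heq
    have hw0eq : Real.sqrt ((1 - z.im^2)*z.re^2) = (1 - z.im^2)*(E-1)/(E+1) := by
      rw [show (1 - z.im^2)*z.re^2 = ((1 - z.im^2)*(E-1)/(E+1))^2 by
        field_simp; linear_combination h5]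
      exact Real.sqrt_sq (le_of_lt (div_pos (mul_pos (by linarith) (by linarith)) (by linarith)))
    rw [deltaK_eval z hz hx, hw0eq]
    have hr : (1 - z.im^2 + (1 - z.im^2)*(E-1)/(E+1)) /
        (1 - z.im^2 - (1 - z.im^2)*(E-1)/(E+1)) = E := by
      rw [div_eq_iff]
      · field_simp
        ring
      · intro h0
        apply hc0ne
        field_simp at h0
        linarith
    rw [hr, hEdef, Real.log_exp]
    ring
end
end
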